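/- For the k-dimensional product copula Π(u₁,…,u_k) = u₁u₂⋯u_k with k ≥ 1, the cumulative copula entropy equals ζ(Π) = k / 2^{k+1}, i.e., -∫_{[0,1]^k} (∏ᵢ uᵢ)·ln(∏ᵢ uᵢ) du = k/2^{k+1}. -/

import Mathlib

open MeasureTheory Real Set

lemma int_x_log : ∫ x in (0:ℝ)..1, x * Real.log x = -(1/4) := by
  have h := intervalIntegral.integral_eq_sub_of_hasDeriv_right_of_le (a := 0) (b := 1)
    (f := fun x => x/2 * (x * Real.log x) - x^2/4) (f' := fun x => x * Real.log x)
    (by norm_num)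
    (((continuous_id.div_const 2).mul Real.continuous_mul_log).sub
      ((continuous_pow 2).div_const 4)).continuousOn
    (fun x hx => by
      have hx0 : x ≠ 0 := ne_of_gt hx.1
      have h1 : HasDerivAt (fun x : ℝ => x/2 * (x * Real.log x) - x^2/4)
          (x * Real.log x) x := by
        have := (((hasDerivAt_id x).div_const 2).mul
          ((hasDerivAt_id x).mul (Real.hasDerivAt_log hx0))).sub
          (((hasDerivAt_pow 2 x)).div_const 4)
        refine (this.congr_of_eventuallyEq (Filter.Eventually.of_forall fun y => ?_)).congr_deriv ?_
        · simp
        · simp only [Pi.mul_apply, id]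
          field_simp
          ring
      exact h1.hasDerivWithinAt)
    (Real.continuous_mul_log.intervalIntegrable 0 1)
  simp only [Real.log_one, Real.log_zero] at h
  rw [h]; norm_num

lemma int_x_log' : ∫ x in Set.Icc (0:ℝ) 1, x * Real.log x = -(1/4) := by
  rw [MeasureTheory.integral_Icc_eq_integral_Ioc,
    ← intervalIntegral.integral_of_le (by norm_num : (0:ℝ) ≤ 1)]
  exact int_x_log

lemma int_x' : ∫ x in Set.Icc (0:ℝ) 1, x = 1/2 := by
  rw [MeasureTheory.integral_Icc_eq_integral_Ioc,
    ← intervalIntegral.integral_of_le (by norm_num : (0:ℝ) ≤ 1)]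
  simp [integral_id]

lemma pointwise_eq {k : ℕ} (u : Fin k → ℝ) :
    (∏ i, u i) * Real.log (∏ i, u i)
      = ∑ j, ∏ i, (if i = j then u i * Real.log (u i) else u i) := by
  by_cases h : ∃ i, u i = 0
  · obtain ⟨i0, hi0⟩ := h
    rw [Finset.prod_eq_zero (Finset.mem_univ i0) hi0, zero_mul]
    symm
    apply Finset.sum_eq_zero
    intro j _
    apply Finset.prod_eq_zero (Finset.mem_univ i0)
    by_cases hij : i0 = j
    · rw [if_pos hij, hi0, zero_mul]
    · rw [if_neg hij]; exact hi0
  · push_neg at h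
    rw [Real.log_prod (fun i _ => h i), Finset.mul_sum]
    refine Finset.sum_congr rfl fun j _ => ?_
    have : ∀ i : Fin k, (if i = j then u i * Real.log (u i) else u i)
        = u i * (if i = j then Real.log (u i) else 1) := by
      intro i; split <;> simp
    rw [Finset.prod_congr rfl fun i _ => this i, Finset.prod_mul_distrib,
      Finset.prod_ite_eq' Finset.univ j (fun i => Real.log (u i))]
    simp

lemma indicator_pi_prod {k : ℕ} (s : Set ℝ) (f : Fin k → ℝ → ℝ) (u : Fin k → ℝ) :
    (Set.univ.pi fun _ => s).indicator (fun u : Fin k → ℝ => ∏ i, f i (u i)) u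
      = ∏ i, s.indicator (f i) (u i) := by
  by_cases h : u ∈ Set.univ.pi fun _ => s
  · rw [Set.indicator_of_mem h]
    exact Finset.prod_congr rfl fun i _ =>
      (Set.indicator_of_mem (h i (Set.mem_univ i)) _).symm
  · rw [Set.indicator_of_notMem h]
    symm
    simp only [Set.mem_pi, Set.mem_univ, forall_true_left, not_forall] at h
    obtain ⟨i0, hi0⟩ := h
    exact Finset.prod_eq_zero (Finset.mem_univ i0) (Set.indicator_of_notMem hi0 _)

theorem stmt1 (k : ℕ) (hk : 1 ≤ k) :
    -∫ u in Set.Icc (0 : Fin k → ℝ) 1,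
        (∏ i, u i) * Real.log (∏ i, u i) = (k : ℝ) / 2 ^ (k + 1) := by
  set g : Fin k → Fin k → ℝ → ℝ :=
    fun j i x => if i = j then x * Real.log x else x with hg
  have hgc : ∀ j i, Continuous (g j i) := by
    intro j i
    by_cases hij : i = j <;> simp [hg, hij]
    · exact Real.continuous_mul_log
    · exact continuous_id
  have hIcc : Set.Icc (0 : Fin k → ℝ) 1 = Set.univ.pi fun _ => Set.Icc (0:ℝ) 1 := by
    rw [Set.pi_univ_Icc]; rfl
  have hint : ∀ j, IntegrableOn (fun u : Fin k → ℝ => ∏ i, g j i (u i))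
      (Set.Icc (0 : Fin k → ℝ) 1) := by
    intro j
    exact (continuous_finset_prod _ fun i _ =>
      (hgc j i).comp (continuous_apply i)).continuousOn.integrableOn_compact isCompact_Icc
  have step1 : ∫ u in Set.Icc (0 : Fin k → ℝ) 1,
      (∏ i, u i) * Real.log (∏ i, u i)
      = ∑ j, ∫ u in Set.Icc (0 : Fin k → ℝ) 1, ∏ i, g j i (u i) := by
    rw [← integral_finset_sum _ fun j _ => hint j]
    exact setIntegral_congr_fun measurableSet_Icc fun u _ => pointwise_eq u
  have step2 : ∀ j, ∫ u in Set.Icc (0 : Fin k → ℝ) 1, ∏ i, g j i (u i)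
      = ∏ i, ∫ x in Set.Icc (0:ℝ) 1, g j i x := by
    intro j
    rw [hIcc, ← integral_indicator (MeasurableSet.univ_pi fun _ => measurableSet_Icc)]
    simp_rw [indicator_pi_prod (Set.Icc (0:ℝ) 1) (g j)]
    rw [MeasureTheory.integral_fintype_prod_volume_eq_prod
      (f := fun i => (Set.Icc (0:ℝ) 1).indicator (g j i))]
    exact Finset.prod_congr rfl fun i _ => integral_indicator measurableSet_Icc
  have step3 : ∀ j i, ∫ x in Set.Icc (0:ℝ) 1, g j i x
      = (if i = j then (-(1/2):ℝ) else 1) * (1/2) := by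
    intro j i
    by_cases hij : i = j <;> simp only [hg, hij, if_true, if_false, ite_true, ite_false]
    · rw [int_x_log']; norm_num
    · rw [int_x']; norm_num
  rw [step1]
  have : ∀ j : Fin k, (∏ i, ∫ x in Set.Icc (0:ℝ) 1, g j i x) = -(1/2) * (1/2:ℝ)^k := by
    intro j
    simp_rw [step3]
    rw [Finset.prod_mul_distrib, Finset.prod_ite_eq' Finset.univ j fun _ => (-(1/2):ℝ)]
    simp [Finset.card_univ]
  simp_rw [step2, this]
  rw [Finset.sum_const, Finset.card_univ, Fintype.card_fin, nsmul_eq_mul,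
    one_div, inv_pow, pow_succ]
  have h2 : (2:ℝ)^k ≠ 0 := by positivity
  field_simp
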